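/- Let DB be an uncertain database all of whose existential probabilities are nonnegative. Then for every sequence S ∈ DB and every pattern α, maxPr_S(α) ≤ maxPr(α); that is, the maximum occurrence probability of α in any single sequence of DB is bounded above by the product of per-step maximum probabilities over the successively projected databases. -/

import Mathlib

variable {I : Type*}

/-- An uncertain sequence: a finite list of (item, existential probability) pairs. -/
abbrev USeq (I : Type*) := List (I × ℝ)

/-- An uncertain database: a finite list of uncertain sequences. -/
abbrev UDB (I : Type*) := List (USeq I)

/-- `α` occurs in `S`: some sublist of `S` has item list `α`. -/
def Occurs (α : List I) (S : USeq I) : Prop :=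
  ∃ o : USeq I, o.Sublist S ∧ o.map Prod.fst = α

/-- Maximum occurrence probability of pattern `α` in `S`
(`0` if `α` has no occurrence in `S`; `1` for the empty pattern). -/
noncomputable def maxPrS [DecidableEq I] (α : List I) (S : USeq I) : ℝ :=
  (((S.sublists.filter fun o => decide (o.map Prod.fst = α)).map
      fun o => (o.map Prod.snd).prod).maximum).getD 0

/-- Greedy projection: `projSeq α S = some S'` iff `α` occurs in `S`, in which case `S'`
is the suffix of `S` strictly after the last matched position of the greedy (leftmost)
occurrence of `α` in `S`.  For the empty pattern it is `S` itself. -/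
def projSeq [DecidableEq I] : List I → USeq I → Option (USeq I)
  | [], S => some S
  | _ :: _, [] => none
  | i :: α, (x, _) :: rest =>
      if x = i then projSeq α rest else projSeq (i :: α) rest

/-- The projected database `DB|α`. -/
def projDB [DecidableEq I] (α : List I) (DB : UDB I) : UDB I :=
  DB.filterMap (projSeq α)

/-- `P̂_D(i)`: maximum probability of an entry with item `i` over all sequences of `D`
(`0` if `i` occurs in no sequence of `D`). -/
noncomputable def Phat [DecidableEq I] (D : UDB I) (i : I) : ℝ :=
  (((D.flatten.filter fun e => decide (e.1 = i)).map Prod.snd).maximum).getD 0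

/-- `maxPr(α)` relative to `DB`: the product of per-step maximum probabilities over the
successively projected databases. -/
noncomputable def maxPrDB [DecidableEq I] (DB : UDB I) (α : List I) : ℝ :=
  ∏ k : Fin α.length, Phat (projDB (α.take k.val) DB) (α.get k)

/-- Expected support of `α` in `DB`. -/
noncomputable def expSup [DecidableEq I] (DB : UDB I) (α : List I) : ℝ :=
  (DB.map fun S => maxPrS α S).sum

/-- `expSup^cap` of a nonempty pattern (junk value `0` on the empty pattern). -/
noncomputable def expSupCap [DecidableEq I] (DB : UDB I) (α : List I) : ℝ :=
  match α.getLast? with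
  | none => 0
  | some i =>
      maxPrDB DB α.dropLast *
        ((projDB α.dropLast DB).map fun S' => maxPrS [i] S').sum

/-- Number of sequences of `D` in which item `i` occurs. -/
def supCount [DecidableEq I] (D : UDB I) (i : I) : ℕ :=
  (D.filter fun S => decide (i ∈ S.map Prod.fst)).length

/-- `expSupport^top` of a nonempty pattern (junk value `0` on the empty pattern). -/
noncomputable def expSupTop [DecidableEq I] (DB : UDB I) (α : List I) : ℝ :=
  match α.getLast? with
  | none => 0
  | some i =>
      maxPrDB DB α.dropLast * Phat (projDB α.dropLast DB) i *
        (supCount (projDB α.dropLast DB) i : ℝ)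

/-- Item `i` occurs in some sequence of `D`. -/
def ItemOccursIn (D : UDB I) (i : I) : Prop :=
  ∃ S ∈ D, i ∈ S.map Prod.fst

/-- `sWeight`: average weight of the items of a pattern. -/
noncomputable def sWeight (w : I → ℝ) (α : List I) : ℝ :=
  (α.map w).sum / (α.length : ℝ)

/-- Maximum weight among the items of a pattern (`0` for the empty pattern). -/
noncomputable def mxWs (w : I → ℝ) (α : List I) : ℝ :=
  ((α.map w).maximum).getD 0

/-- Maximum weight among items occurring in some sequence of `D` (`0` if none). -/
noncomputable def mxWDB (w : I → ℝ) (D : UDB I) : ℝ :=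
  ((D.flatten.map fun e => w e.1).maximum).getD 0

/-- `wgt^cap`. -/
noncomputable def wgtCap [DecidableEq I] (DB : UDB I) (w : I → ℝ) (α : List I) : ℝ :=
  max (mxWDB w (projDB α.dropLast DB)) (mxWs w α)

/-- Weighted expected support. -/
noncomputable def WES [DecidableEq I] (DB : UDB I) (w : I → ℝ) (α : List I) : ℝ :=
  expSup DB α * sWeight w α

/-- `wExpSup^cap`. -/
noncomputable def wExpSupCap [DecidableEq I] (DB : UDB I) (w : I → ℝ) (α : List I) : ℝ :=
  expSupCap DB α * wgtCap DB w α
section Aux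

lemma le_unbot'_maximum {l : List ℝ} {a : ℝ} (h : a ∈ l) : a ≤ l.maximum.getD 0 := by
  cases hm : l.maximum with
  | bot => rw [List.maximum_eq_bot] at hm; simp [hm] at h
  | coe m => exact List.le_maximum_of_mem h hm

lemma unbot'_maximum_le {l : List ℝ} {c : ℝ} (h0 : 0 ≤ c) (h : ∀ a ∈ l, a ≤ c) :
    l.maximum.getD 0 ≤ c := by
  cases hm : l.maximum with
  | bot => exact h0
  | coe m => exact h m (List.maximum_mem hm)

lemma maxPrS_le [DecidableEq I] {α : List I} {S : USeq I} {c : ℝ} (h0 : 0 ≤ c)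
    (h : ∀ o : USeq I, o.Sublist S → o.map Prod.fst = α → (o.map Prod.snd).prod ≤ c) :
    maxPrS α S ≤ c := by
  apply unbot'_maximum_le h0
  intro a ha
  simp only [List.mem_map, List.mem_filter, List.mem_sublists, decide_eq_true_eq] at ha
  obtain ⟨o, ⟨hs, hf⟩, rfl⟩ := ha
  exact h o hs hf

lemma le_maxPrS [DecidableEq I] {α : List I} {S o : USeq I} (hs : o.Sublist S)
    (hf : o.map Prod.fst = α) : (o.map Prod.snd).prod ≤ maxPrS α S := by
  apply le_unbot'_maximum
  simp only [List.mem_map, List.mem_filter, List.mem_sublists, decide_eq_true_eq]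
  exact ⟨o, ⟨hs, hf⟩, rfl⟩

lemma projSeq_sublist [DecidableEq I] : ∀ (α : List I) (S S' : USeq I),
    projSeq α S = some S' → S'.Sublist S := by
  intro α S
  induction S generalizing α with
  | nil =>
    intro S' h
    cases α with
    | nil => simp [projSeq] at h; simp [h]
    | cons i γ => simp [projSeq] at h
  | cons e rest ih =>
    intro S' h
    cases α with
    | nil => simp [projSeq] at h; simp [h]
    | cons i γ =>
      obtain ⟨x, q⟩ := e
      by_cases hx : x = i
      · simp only [projSeq, hx, if_true] at h
        exact (ih γ S' h).cons _
      · simp only [projSeq, hx, if_false] at h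
        exact (ih (i :: γ) S' h).cons _

lemma projSeq_comp [DecidableEq I] (i : I) (γ : List I) (S : USeq I) :
    projSeq (i :: γ) S = (projSeq [i] S).bind (projSeq γ) := by
  induction S with
  | nil => rfl
  | cons e rest ih =>
    obtain ⟨x, p⟩ := e
    by_cases h : x = i <;> simp [projSeq, h, ih]

lemma projDB_nil [DecidableEq I] (DB : UDB I) : projDB [] DB = DB := by
  induction DB with
  | nil => rfl
  | cons S rest ih => simpa [projDB, projSeq, List.filterMap_cons] using ih

lemma projDB_cons [DecidableEq I] (i : I) (γ : List I) (DB : UDB I) :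
    projDB (i :: γ) DB = projDB γ (projDB [i] DB) := by
  simp only [projDB, List.filterMap_filterMap]
  congr 1
  funext S
  exact projSeq_comp i γ S

lemma le_Phat [DecidableEq I] {D : UDB I} {S : USeq I} (hS : S ∈ D)
    {e : I × ℝ} (he : e ∈ S) : e.2 ≤ Phat D e.1 := by
  apply le_unbot'_maximum
  simp only [List.mem_map, List.mem_filter, decide_eq_true_eq]
  exact ⟨e, ⟨List.mem_flatten.2 ⟨S, hS, he⟩, rfl⟩, rfl⟩

lemma Phat_nonneg [DecidableEq I] {D : UDB I} (hp : ∀ S ∈ D, ∀ e ∈ S, 0 ≤ e.2) (i : I) :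
    0 ≤ Phat D i := by
  unfold Phat
  cases hm : (((D.flatten.filter fun e => decide (e.1 = i))).map Prod.snd).maximum with
  | bot => exact le_refl 0
  | coe m =>
    have hmem := List.maximum_mem hm
    simp only [List.mem_map, List.mem_filter, List.mem_flatten, decide_eq_true_eq] at hmem
    obtain ⟨e, ⟨⟨S, hS, he⟩, _⟩, rfl⟩ := hmem
    exact hp S hS e he

lemma hp_projDB [DecidableEq I] {DB : UDB I} (hp : ∀ S ∈ DB, ∀ e ∈ S, 0 ≤ e.2)
    (γ : List I) : ∀ S' ∈ projDB γ DB, ∀ e ∈ S', 0 ≤ e.2 := by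
  intro S' hS' e he
  simp only [projDB, List.mem_filterMap] at hS'
  obtain ⟨S, hS, hproj⟩ := hS'
  exact hp S hS e ((projSeq_sublist γ S S' hproj).subset he)

lemma maxPrDB_nonneg [DecidableEq I] {DB : UDB I} (hp : ∀ S ∈ DB, ∀ e ∈ S, 0 ≤ e.2)
    (α : List I) : 0 ≤ maxPrDB DB α := by
  unfold maxPrDB
  apply Finset.prod_nonneg
  intro k _
  exact Phat_nonneg (hp_projDB hp _) _

lemma maxPrDB_cons [DecidableEq I] (DB : UDB I) (i : I) (β : List I) :
    maxPrDB DB (i :: β) = Phat DB i * maxPrDB (projDB [i] DB) β := by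
  unfold maxPrDB
  show ∏ k : Fin (β.length + 1), _ = _
  rw [Fin.prod_univ_succ]
  congr 1
  · exact congrArg (fun D => Phat D i) (projDB_nil DB)
  · apply Finset.prod_congr rfl
    intro k _
    rw [Fin.val_succ, List.take_succ_cons, projDB_cons]
    rfl

lemma sublist_projSeq [DecidableEq I] {i : I} {p : ℝ} {o' S : USeq I}
    (hs : ((i, p) :: o').Sublist S) :
    ∃ S', projSeq [i] S = some S' ∧ o'.Sublist S' := by
  induction S with
  | nil => simp at hs
  | cons e rest ihS =>
    cases hs with
    | cons _ hs' =>
      obtain ⟨S'', h1, h2⟩ := ihS hs'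
      obtain ⟨x, q⟩ := e
      by_cases hx : x = i
      · exact ⟨rest, by simp [projSeq, hx], h2.trans (projSeq_sublist _ _ _ h1)⟩
      · exact ⟨S'', by simp [projSeq, hx, h1], h2⟩
    | cons_cons _ hs' =>
      exact ⟨rest, by simp [projSeq], hs'⟩

end Aux

/-- If all probabilities of `DB` are nonnegative, then for every `S ∈ DB` and every
pattern `α`, `maxPr_S(α) ≤ maxPr(α)`. -/
theorem maxPrS_le_maxPrDB [DecidableEq I]
    (DB : UDB I) (hp : ∀ S ∈ DB, ∀ e ∈ S, 0 ≤ e.2) :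
    ∀ S ∈ DB, ∀ α : List I, maxPrS α S ≤ maxPrDB DB α := by
  suffices main : ∀ (α : List I) (DB : UDB I), (∀ S ∈ DB, ∀ e ∈ S, 0 ≤ e.2) →
      ∀ S ∈ DB, maxPrS α S ≤ maxPrDB DB α from
    fun S hS α => main α DB hp S hS
  intro α
  induction α with
  | nil =>
    intro DB hp S hS
    have h1 : maxPrDB DB ([] : List I) = 1 := by simp [maxPrDB]
    rw [h1]
    apply maxPrS_le zero_le_one
    intro o hs hf
    have : o = [] := by simpa using hf
    simp [this]
  | cons i β ih =>
    intro DB hp S hS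
    rw [maxPrDB_cons]
    apply maxPrS_le
    · exact mul_nonneg (Phat_nonneg hp i) (maxPrDB_nonneg (hp_projDB hp [i]) β)
    · intro o hs hf
      cases o with
      | nil => simp at hf
      | cons e o' =>
        obtain ⟨x, p⟩ := e
        simp only [List.map_cons, List.cons.injEq] at hf
        obtain ⟨hx, hβ⟩ := hf
        subst x
        obtain ⟨S', hS', ho'⟩ := sublist_projSeq hs
        have hmem : S' ∈ projDB [i] DB := List.mem_filterMap.2 ⟨S, hS, hS'⟩
        have h1 : p ≤ Phat DB i := le_Phat hS (hs.subset List.mem_cons_self)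
        have h2 : (o'.map Prod.snd).prod ≤ maxPrDB (projDB [i] DB) β :=
          le_trans (le_maxPrS ho' hβ) (ih (projDB [i] DB) (hp_projDB hp [i]) S' hmem)
        have hnn : 0 ≤ (o'.map Prod.snd).prod := by
          apply List.prod_nonneg
          intro a ha
          simp only [List.mem_map] at ha
          obtain ⟨e, he, rfl⟩ := ha
          exact hp S hS e (hs.subset (List.mem_cons_of_mem _ he))
        simp only [List.map_cons, List.prod_cons]
        exact mul_le_mul h1 h2 hnn (Phat_nonneg hp i)
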